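/- Let H_μ be the hypergraph model obtained from a graph G, a node set S ⊆ V(G), and the collection M of all occurrences of a motif μ having at least one node in S: the nodes of H_μ are S ∪ {r} (where r is the contraction of V \ S), and for each motif occurrence G' = (V', E') ∈ M there is a net equal to V' if V' ⊆ S, and to (V' ∩ S) ∪ {r} otherwise. Then every k-way partition P of H_μ corresponds to a distinct k-way partition P' of G (assigning each node of G in S to the block of its model node, and all nodes of V \ S to the block of r) such that the number of cut nets of P equals the number of motif occurrences of μ cut by P', assuming the motif enumeration is exact. -/
import Mathlib


open Classical in
/-- Hypergraph model of local motif clustering: nodes of the model are `S ∪ {r}`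
(`r` being the contraction of the complement of `S`, realized by the map `φ`),
and each motif occurrence touching `S` gives a net equal to its `φ`-image.
Every `k`-way partition `P` of the model corresponds to the partition
`P' = P ∘ φ` of `G`, and the number of cut nets of `P` equals the number of
motif occurrences cut by `P'` (exact enumeration: `M` consists precisely of all
occurrences touching `S`). -/
theorem stmt_5 {V : Type*} [DecidableEq V]
    (S : Finset V) (Mall M : Finset (Finset V))
    (hM : M = Mall.filter (fun m => (m ∩ S).Nonempty))
    (k : ℕ) (P : ({v // v ∈ S} ⊕ Unit) → Fin k)
    (φ : V → ({v // v ∈ S} ⊕ Unit))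
    (hφ : ∀ v, φ v = if h : v ∈ S then Sum.inl ⟨v, h⟩ else Sum.inr ())
    (P' : V → Fin k) (hP' : P' = P ∘ φ) :
    (M.filter (fun m =>
        ∃ x ∈ Finset.image φ m, ∃ y ∈ Finset.image φ m, P x ≠ P y)).card
      = (Mall.filter (fun m => ∃ x ∈ m, ∃ y ∈ m, P' x ≠ P' y)).card := by
  subst hM hP'
  congr 1
  ext m
  simp only [Finset.mem_filter, Finset.mem_image, Function.comp_apply]
  constructor
  · rintro ⟨⟨hm, -⟩, x, ⟨a, ha, rfl⟩, y, ⟨b, hb, rfl⟩, hxy⟩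
    exact ⟨hm, a, ha, b, hb, hxy⟩
  · rintro ⟨hm, a, ha, b, hb, hab⟩
    refine ⟨⟨hm, ?_⟩, φ a, ⟨a, ha, rfl⟩, φ b, ⟨b, hb, rfl⟩, hab⟩
    by_contra h
    rw [Finset.not_nonempty_iff_eq_empty] at h
    have hna : a ∉ S := fun hs => by
      have := Finset.mem_inter.mpr ⟨ha, hs⟩; simp [h] at this
    have hnb : b ∉ S := fun hs => by
      have := Finset.mem_inter.mpr ⟨hb, hs⟩; simp [h] at this
    apply hab
    rw [hφ a, hφ b, dif_neg hna, dif_neg hnb]
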